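/- Let σ : ℝ^d → ℝ^{d×m} satisfy the one-sided condition 2(x - x̄)·(b(x) - b(x̄)) + (p₁ - 1)|σ(x) - σ(x̄)|² ≤ L |x - x̄|² for all x, x̄ (with p₁ > 2), where b : ℝ^d → ℝ^d satisfies |b(x) - b(x̄)| ≤ L (1 + |x| + |x̄|)^ρ |x - x̄|. Then there exists K > 0 such that |σ(x) - σ(x̄)| ≤ K (1 + |x| + |x̄|)^{ρ/2} |x - x̄| for all x, x̄ ∈ ℝ^d. -/

import Mathlib

/-- The one-sided (monotonicity-type) condition A-3 together with the polynomial
Lipschitz estimate on the drift implies a polynomial Lipschitz estimate on the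
diffusion coefficient.  The `d × m` matrix `σ(x)` is encoded as an element of
`EuclideanSpace ℝ (Fin d × Fin m)`, whose norm is the Hilbert–Schmidt norm. -/
theorem stmt4 {d m : ℕ}
    (b : EuclideanSpace ℝ (Fin d) → EuclideanSpace ℝ (Fin d))
    (σ : EuclideanSpace ℝ (Fin d) → EuclideanSpace ℝ (Fin d × Fin m))
    (L ρ p₁ : ℝ) (hL : 0 < L) (hρ : 1 ≤ ρ) (hp₁ : 2 < p₁)
    (hmono : ∀ x y : EuclideanSpace ℝ (Fin d),
      2 * (inner ℝ (x - y) (b x - b y) : ℝ) + (p₁ - 1) * ‖σ x - σ y‖ ^ 2 ≤ L * ‖x - y‖ ^ 2)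
    (hblip : ∀ x y : EuclideanSpace ℝ (Fin d),
      ‖b x - b y‖ ≤ L * (1 + ‖x‖ + ‖y‖) ^ ρ * ‖x - y‖) :
    ∃ K > 0, ∀ x y : EuclideanSpace ℝ (Fin d),
      ‖σ x - σ y‖ ≤ K * (1 + ‖x‖ + ‖y‖) ^ (ρ / 2) * ‖x - y‖ := by

  refine ⟨Real.sqrt (3 * L / (p₁ - 1)), Real.sqrt_pos.mpr (div_pos (by linarith) (by linarith)), ?_⟩
  intro x y
  set A := ‖σ x - σ y‖ with hA
  set B := ‖x - y‖ with hB
  set s := 1 + ‖x‖ + ‖y‖ with hs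
  have hs1 : (1 : ℝ) ≤ s := by
    have := norm_nonneg x; have := norm_nonneg y; simp [hs]; linarith
  have hs0 : (0 : ℝ) < s := lt_of_lt_of_le one_pos hs1
  have hsr1 : (1 : ℝ) ≤ s ^ ρ := Real.one_le_rpow hs1 (by linarith)
  have hcs : -(B * ‖b x - b y‖) ≤ (inner ℝ (x - y) (b x - b y) : ℝ) := by
    have := abs_real_inner_le_norm (x - y) (b x - b y)
    have h2 := neg_abs_le (inner ℝ (x - y) (b x - b y) : ℝ)
    nlinarith [norm_nonneg (x - y), norm_nonneg (b x - b y)]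
  have hkey : (p₁ - 1) * A ^ 2 ≤ 3 * L * s ^ ρ * B ^ 2 := by
    have h1 := hmono x y
    have h2 := hblip x y
    nlinarith [norm_nonneg (x - y), norm_nonneg (b x - b y), norm_nonneg (σ x - σ y),
      mul_le_mul_of_nonneg_left h2 (norm_nonneg (x - y)),
      mul_le_mul_of_nonneg_right hsr1 (mul_nonneg hL.le (sq_nonneg B))]
  have hA2 : A ^ 2 ≤ (3 * L / (p₁ - 1)) * (s ^ ρ * B ^ 2) := by
    rw [div_mul_eq_mul_div, le_div_iff₀ (by linarith)]
    nlinarith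
  calc A = Real.sqrt (A ^ 2) := by rw [Real.sqrt_sq (norm_nonneg _)]
    _ ≤ Real.sqrt ((3 * L / (p₁ - 1)) * (s ^ ρ * B ^ 2)) := Real.sqrt_le_sqrt hA2
    _ = Real.sqrt (3 * L / (p₁ - 1)) * (Real.sqrt (s ^ ρ) * Real.sqrt (B ^ 2)) := by
        rw [Real.sqrt_mul (le_of_lt (div_pos (by linarith) (by linarith))), Real.sqrt_mul (by positivity)]
    _ = Real.sqrt (3 * L / (p₁ - 1)) * s ^ (ρ / 2) * B := by
        have hsq : Real.sqrt (s ^ ρ) = s ^ (ρ / 2) := by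
          rw [Real.sqrt_eq_rpow, ← Real.rpow_mul hs0.le, mul_one_div]
        rw [Real.sqrt_sq (norm_nonneg _), hsq]; ring
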